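/- Let μ be a ferromagnetic Ising Gibbs measure on {−1,1}^Λ, Λ finite, with h_i ≥ 0 and J_{ij} ≥ 0. Then for every A, B ⊆ Λ, ⟨σ_A σ_B⟩_μ ≥ ⟨σ_A⟩_μ ⟨σ_B⟩_μ (second Griffiths inequality). -/

import Mathlib

/-- The spin value `±1` associated to a Boolean. -/
noncomputable def spin (b : Bool) : ℝ := if b then 1 else -1

namespace GriffithsAux

lemma spin_mul_self (b : Bool) : spin b * spin b = 1 := by cases b <;> norm_num [spin]

lemma spin_pm (b : Bool) : spin b = 1 ∨ spin b = -1 := by cases b <;> simp [spin]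

lemma spin_beq (a b : Bool) : spin (a == b) = spin a * spin b := by
  cases a <;> cases b <;> norm_num [spin]

variable {Λ : Type*} [Fintype Λ] [DecidableEq Λ]

/-- The character `σ ↦ ∏_{i ∈ S} spin (σ i)`. -/
noncomputable def chi (S : Finset Λ) (σ : Λ → Bool) : ℝ := ∏ i ∈ S, spin (σ i)

lemma chi_mul (S T : Finset Λ) (σ : Λ → Bool) :
    chi S σ * chi T σ = chi (symmDiff S T) σ := by
  classical
  unfold chi
  rw [← Finset.prod_union_inter]
  have h1 : S ∪ T = (symmDiff S T) ∪ (S ∩ T) := by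
    ext x; simp only [Finset.mem_union, Finset.mem_symmDiff, Finset.mem_inter]; tauto
  have h2 : Disjoint (symmDiff S T) (S ∩ T) := by
    rw [Finset.disjoint_left]
    intro a ha hb
    simp only [Finset.mem_symmDiff] at ha
    simp only [Finset.mem_inter] at hb
    tauto
  rw [h1, Finset.prod_union h2, mul_assoc, ← Finset.prod_mul_distrib]
  simp [spin_mul_self]

lemma chi_pm (S : Finset Λ) (σ : Λ → Bool) : chi S σ = 1 ∨ chi S σ = -1 := by
  rw [← mul_self_eq_one_iff, chi_mul]
  simp [chi, symmDiff_self]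

lemma sum_chi_nonneg (S : Finset Λ) : 0 ≤ ∑ σ : Λ → Bool, chi S σ := by
  classical
  have key : ∑ σ : Λ → Bool, chi S σ
      = ∏ i : Λ, ∑ b : Bool, (if i ∈ S then spin b else 1) := by
    rw [Fintype.prod_sum (fun i b => if i ∈ S then spin b else 1)]
    refine Fintype.sum_congr _ _ fun σ => ?_
    rw [chi, ← Finset.prod_filter]
    congr 1
    simp [Finset.filter_mem_eq_inter]
  rw [key]
  apply Finset.prod_nonneg
  intro i _
  by_cases hi : i ∈ S <;> simp [hi, spin]

/-- Nonnegative Fourier coefficients. -/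
def NN (g : (Λ → Bool) → ℝ) : Prop :=
  ∃ c : Finset Λ → ℝ, (∀ S, 0 ≤ c S) ∧ ∀ σ, g σ = ∑ S : Finset Λ, c S * chi S σ

lemma NN.sum_nonneg {g : (Λ → Bool) → ℝ} (hg : NN g) : 0 ≤ ∑ σ : Λ → Bool, g σ := by
  obtain ⟨c, hc, hrep⟩ := hg
  calc (0:ℝ) ≤ ∑ S : Finset Λ, c S * ∑ σ : Λ → Bool, chi S σ := by
        apply Finset.sum_nonneg
        intro S _
        exact mul_nonneg (hc S) (sum_chi_nonneg S)
    _ = ∑ σ : Λ → Bool, g σ := by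
        simp_rw [Finset.mul_sum, hrep]
        rw [Finset.sum_comm]

lemma NN_chi (S : Finset Λ) : NN (chi S) := by
  classical
  refine ⟨fun T => if T = S then 1 else 0, fun T => by positivity, fun σ => ?_⟩
  simp [ite_mul, Finset.sum_ite_eq']

lemma NN_const (a : ℝ) (ha : 0 ≤ a) : NN (fun _ : Λ → Bool => a) := by
  classical
  refine ⟨fun T => if T = ∅ then a else 0, fun T => by positivity, fun σ => ?_⟩
  simp [ite_mul, Finset.sum_ite_eq', chi]

lemma NN.add {g₁ g₂ : (Λ → Bool) → ℝ} (h1 : NN g₁) (h2 : NN g₂) :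
    NN (fun σ => g₁ σ + g₂ σ) := by
  obtain ⟨c, hc, hrc⟩ := h1
  obtain ⟨d, hd, hrd⟩ := h2
  refine ⟨fun S => c S + d S, fun S => add_nonneg (hc S) (hd S), fun σ => ?_⟩
  simp [hrc, hrd, add_mul, Finset.sum_add_distrib]

lemma NN.smul {g : (Λ → Bool) → ℝ} (a : ℝ) (ha : 0 ≤ a) (hg : NN g) :
    NN (fun σ => a * g σ) := by
  obtain ⟨c, hc, hrc⟩ := hg
  refine ⟨fun S => a * c S, fun S => mul_nonneg ha (hc S), fun σ => ?_⟩
  simp [hrc, Finset.mul_sum, mul_assoc]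

lemma NN.mul {g₁ g₂ : (Λ → Bool) → ℝ} (h1 : NN g₁) (h2 : NN g₂) :
    NN (fun σ => g₁ σ * g₂ σ) := by
  classical
  obtain ⟨c, hc, hrc⟩ := h1
  obtain ⟨d, hd, hrd⟩ := h2
  refine ⟨fun U => ∑ p ∈ (Finset.univ ×ˢ Finset.univ).filter
      (fun p : Finset Λ × Finset Λ => symmDiff p.1 p.2 = U), c p.1 * d p.2, ?_, ?_⟩
  · intro U
    apply Finset.sum_nonneg
    intro p _
    exact mul_nonneg (hc p.1) (hd p.2)
  · intro σ
    show g₁ σ * g₂ σ = _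
    rw [hrc, hrd, Finset.sum_mul_sum]
    simp_rw [Finset.sum_mul]
    rw [← Finset.sum_product']
    have : ∀ p : Finset Λ × Finset Λ,
        c p.1 * chi p.1 σ * (d p.2 * chi p.2 σ) = c p.1 * d p.2 * chi (symmDiff p.1 p.2) σ := by
      intro p
      rw [← chi_mul]; ring
    calc ∑ p ∈ Finset.univ ×ˢ Finset.univ, c p.1 * chi p.1 σ * (d p.2 * chi p.2 σ)
        = ∑ p ∈ Finset.univ ×ˢ Finset.univ, c p.1 * d p.2 * chi (symmDiff p.1 p.2) σ :=
          Finset.sum_congr rfl fun p _ => this p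
      _ = ∑ U : Finset Λ, ∑ p ∈ (Finset.univ ×ˢ Finset.univ).filter
            (fun p : Finset Λ × Finset Λ => symmDiff p.1 p.2 = U), c p.1 * d p.2 * chi (symmDiff p.1 p.2) σ := by
          rw [Finset.sum_fiberwise_of_maps_to (fun p _ => Finset.mem_univ _)]
      _ = ∑ U : Finset Λ, ∑ p ∈ (Finset.univ ×ˢ Finset.univ).filter
            (fun p : Finset Λ × Finset Λ => symmDiff p.1 p.2 = U), c p.1 * d p.2 * chi U σ :=
          Finset.sum_congr rfl fun U _ => Finset.sum_congr rfl
            fun p hp => by rw [(Finset.mem_filter.mp hp).2]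

lemma chi_def (S : Finset Λ) (σ : Λ → Bool) : chi S σ = ∏ i ∈ S, spin (σ i) := rfl

lemma NN_prod {ι : Type*} (s : Finset ι) (f : ι → (Λ → Bool) → ℝ)
    (hf : ∀ i ∈ s, NN (f i)) : NN (fun σ => ∏ i ∈ s, f i σ) := by
  classical
  induction s using Finset.cons_induction with
  | empty => simpa using NN_const 1 zero_le_one
  | cons a s ha ih =>
    simp_rw [Finset.prod_cons]
    exact (hf a (Finset.mem_cons_self a s)).mul
      (ih fun i hi => hf i (Finset.mem_cons.mpr (Or.inr hi)))

lemma NN_exp_pm {f : (Λ → Bool) → ℝ} (hf : NN f) (hpm : ∀ σ, f σ = 1 ∨ f σ = -1)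
    (c : ℝ) (hc : 0 ≤ c) : NN (fun σ => Real.exp (c * f σ)) := by
  have hpt : (fun σ => Real.exp (c * f σ))
      = fun σ => Real.cosh c + Real.sinh c * f σ := by
    funext σ
    rcases hpm σ with hh | hh <;> rw [hh]
    · rw [mul_one, mul_one, Real.cosh_add_sinh]
    · rw [mul_neg_one, mul_neg_one, ← sub_eq_add_neg, Real.cosh_sub_sinh]
  rw [hpt]
  exact (NN_const _ (Real.cosh_pos c).le).add (hf.smul _ (Real.sinh_nonneg_iff.mpr hc))

lemma NN_spin (i : Λ) : NN (fun σ : Λ → Bool => spin (σ i)) := by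
  have h1 : (fun σ : Λ → Bool => spin (σ i)) = chi {i} := by
    funext σ; simp [chi]
  rw [h1]; exact NN_chi {i}

/-- Pointwise flip of `σ` by `t` (group operation with `spin` a character). -/
def flp (σ t : Λ → Bool) : Λ → Bool := fun i => σ i == t i

lemma flp_invol (σ : Λ → Bool) : Function.Involutive (flp σ) := by
  intro t; funext i; unfold flp; cases σ i <;> cases t i <;> rfl

lemma spin_flp (σ t : Λ → Bool) (i : Λ) : spin (flp σ t i) = spin (σ i) * spin (t i) :=
  spin_beq _ _

lemma chi_flp (S : Finset Λ) (σ t : Λ → Bool) : chi S (flp σ t) = chi S σ * chi S t := by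
  unfold chi
  rw [← Finset.prod_mul_distrib]
  exact Finset.prod_congr rfl fun i _ => spin_flp σ t i

lemma one_add_spin_nonneg (b : Bool) : 0 ≤ 1 + spin b := by
  rcases spin_pm b with hh | hh <;> rw [hh] <;> norm_num

lemma one_add_spin_mul_spin_nonneg (a b : Bool) : 0 ≤ 1 + spin a * spin b := by
  rcases spin_pm a with h1 | h1 <;> rcases spin_pm b with h2 | h2 <;>
    rw [h1, h2] <;> norm_num

lemma w_mul_w_flp {β : ℝ} (h : Λ → ℝ) (J : Λ → Λ → ℝ)
    (w : (Λ → Bool) → ℝ)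
    (hw : ∀ σ : Λ → Bool, w σ = Real.exp (β * ((∑ i, h i * spin (σ i)) +
        (1/2) * ∑ i, ∑ j, J i j * spin (σ i) * spin (σ j))))
    (σ t : Λ → Bool) :
    w σ * w (flp σ t) =
      (∏ i, Real.exp ((β * h i * (1 + spin (t i))) * spin (σ i))) *
      ∏ i, ∏ j, Real.exp (((β/2) * J i j * (1 + spin (t i) * spin (t j)))
        * (spin (σ i) * spin (σ j))) := by
  rw [hw, hw, ← Real.exp_add, ← Real.exp_sum]
  conv_rhs => rw [show (∏ i, ∏ j, Real.exp (((β/2) * J i j * (1 + spin (t i) * spin (t j)))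
        * (spin (σ i) * spin (σ j)))) = ∏ i, Real.exp (∑ j, ((β/2) * J i j *
        (1 + spin (t i) * spin (t j))) * (spin (σ i) * spin (σ j))) from
      Finset.prod_congr rfl fun i _ => (Real.exp_sum _ _).symm]
  rw [← Real.exp_sum, ← Real.exp_add]
  congr 1
  simp_rw [spin_flp]
  rw [mul_add, mul_add, Finset.mul_sum, Finset.mul_sum, Finset.mul_sum, Finset.mul_sum]
  simp_rw [Finset.mul_sum]
  rw [add_add_add_comm, ← Finset.sum_add_distrib, ← Finset.sum_add_distrib]
  congr 1
  · exact Finset.sum_congr rfl fun i _ => by ring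
  · refine Finset.sum_congr rfl fun i _ => ?_
    rw [← Finset.sum_add_distrib]
    exact Finset.sum_congr rfl fun j _ => by ring

end GriffithsAux


open GriffithsAux in
/-- Second Griffiths (GKS) inequality: for nonnegative fields and ferromagnetic couplings,
`⟨σ_A σ_B⟩ ≥ ⟨σ_A⟩⟨σ_B⟩`. -/
theorem griffiths_second (Λ : Type*) [Fintype Λ] [DecidableEq Λ]
    (β : ℝ) (hβ : 0 ≤ β) (h : Λ → ℝ) (hh : ∀ i, 0 ≤ h i)
    (J : Λ → Λ → ℝ) (hJ : ∀ i j, 0 ≤ J i j) (hJsymm : ∀ i j, J i j = J j i)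
    (w : (Λ → Bool) → ℝ)
    (hw : ∀ σ : Λ → Bool, w σ =
      Real.exp (β * ((∑ i, h i * spin (σ i)) +
        (1 / 2) * ∑ i, ∑ j, J i j * spin (σ i) * spin (σ j))))
    (A B : Finset Λ) :
    (∑ σ : Λ → Bool, w σ * (∏ i ∈ A, spin (σ i)) * (∏ i ∈ B, spin (σ i))) *
        (∑ σ : Λ → Bool, w σ)
      ≥ (∑ σ : Λ → Bool, w σ * ∏ i ∈ A, spin (σ i)) *
        (∑ σ : Λ → Bool, w σ * ∏ i ∈ B, spin (σ i)) := by
  classical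
  simp only [← chi_def]
  rw [ge_iff_le, ← sub_nonneg]
  have hNNpair : ∀ t : Λ → Bool,
      NN (fun σ => w σ * w (flp σ t) * chi A σ * chi B σ) := by
    intro t
    have h1 : (fun σ : Λ → Bool => w σ * w (flp σ t)) = fun σ =>
        (∏ i, Real.exp ((β * h i * (1 + spin (t i))) * spin (σ i))) *
        ∏ i, ∏ j, Real.exp (((β/2) * J i j * (1 + spin (t i) * spin (t j)))
          * (spin (σ i) * spin (σ j))) := funext fun σ => w_mul_w_flp h J w hw σ t
    have h2 : NN (fun σ : Λ → Bool => w σ * w (flp σ t)) := by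
      rw [h1]
      refine NN.mul (NN_prod _ _ ?_) (NN_prod _ _ ?_)
      · intro i _
        exact NN_exp_pm (NN_spin i) (fun σ => spin_pm _) _
          (mul_nonneg (mul_nonneg hβ (hh i)) (one_add_spin_nonneg _))
      · intro i _
        refine NN_prod _ _ ?_
        intro j _
        refine NN_exp_pm ((NN_spin i).mul (NN_spin j)) ?_ _
          (mul_nonneg (mul_nonneg (div_nonneg hβ (by norm_num)) (hJ i j))
            (one_add_spin_mul_spin_nonneg _ _))
        intro σ
        rcases spin_pm (σ i) with e1 | e1 <;> rcases spin_pm (σ j) with e2 | e2 <;>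
          rw [e1, e2] <;> norm_num
    exact (h2.mul (NN_chi A)).mul (NN_chi B)
  have step1 : (∑ σ : Λ → Bool, w σ * chi A σ * chi B σ) * (∑ σ : Λ → Bool, w σ)
      - (∑ σ : Λ → Bool, w σ * chi A σ) * (∑ σ : Λ → Bool, w σ * chi B σ)
      = ∑ t : Λ → Bool, (1 - chi B t) *
          ∑ σ : Λ → Bool, w σ * w (flp σ t) * chi A σ * chi B σ := by
    rw [Finset.sum_mul_sum, Finset.sum_mul_sum, ← Finset.sum_sub_distrib]
    simp_rw [← Finset.sum_sub_distrib]
    have reidx : ∀ (σ : Λ → Bool) (F : (Λ → Bool) → ℝ),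
        ∑ τ : Λ → Bool, F τ = ∑ t : Λ → Bool, F (flp σ t) := fun σ F =>
      (Fintype.sum_bijective (flp σ) (flp_invol σ).bijective _ _ (fun t => rfl)).symm
    calc ∑ σ : Λ → Bool, ∑ τ : Λ → Bool,
            (w σ * chi A σ * chi B σ * w τ - w σ * chi A σ * (w τ * chi B τ))
        = ∑ σ : Λ → Bool, ∑ t : Λ → Bool,
            (w σ * chi A σ * chi B σ * w (flp σ t)
              - w σ * chi A σ * (w (flp σ t) * chi B (flp σ t))) :=
          Finset.sum_congr rfl fun σ _ => reidx σ _
      _ = ∑ t : Λ → Bool, ∑ σ : Λ → Bool,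
            (w σ * chi A σ * chi B σ * w (flp σ t)
              - w σ * chi A σ * (w (flp σ t) * chi B (flp σ t))) := Finset.sum_comm
      _ = ∑ t : Λ → Bool, (1 - chi B t) *
            ∑ σ : Λ → Bool, w σ * w (flp σ t) * chi A σ * chi B σ := by
          refine Finset.sum_congr rfl fun t _ => ?_
          rw [Finset.mul_sum]
          refine Finset.sum_congr rfl fun σ _ => ?_
          rw [chi_flp]
          ring
  rw [step1]
  apply Finset.sum_nonneg
  intro t _
  apply mul_nonneg
  · rcases chi_pm B t with e | e <;> rw [e] <;> norm_num
  · exact (hNNpair t).sum_nonneg
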